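/- arXiv:1812.10351 — 2 statements merged into one kernel-verified Lean document; each statement's English description precedes it below -/
import Mathlib

section
/- For every positive integer n, the sum over k from 0 to n-1 of (11k^3+7k^2-1)·(-1)^k·β_k is divisible by n^2, where β_k = Σ_{j=0}^{k} C(k,j)^2·C(k+j,j). -/
def apheryBeta (k : ℕ) : ℕ := ∑ j ∈ Finset.range (k + 1), (Nat.choose k j) ^ 2 * Nat.choose (k + j) j

/-- summand of the Apéry number, as an integer -/
def apBB (k j : ℕ) : ℤ := ((Nat.choose k j : ℤ))^2 * (Nat.choose (k+j) j : ℤ)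

/-- Zeilberger certificate antiderivative -/
def apGG (k j : ℕ) : ℤ :=
  (((j:ℤ)+1)^2 + 6*(k:ℤ)*((j:ℤ)+1) + ((j:ℤ)+1) - 11*(k:ℤ)^2 - 15*(k:ℤ) - 4) * apBB k j

lemma apPoint (m i : ℕ) :
    ((m:ℤ)+2)^2 * apBB (m+2) (i+1)
      - (11*((m:ℤ)+1)^2 + 11*((m:ℤ)+1) + 3) * apBB (m+1) (i+1)
      - ((m:ℤ)+1)^2 * apBB m (i+1)
    = apGG (m+1) (i+1) - apGG (m+1) i := by
  rcases lt_trichotomy i (m+1) with h | h | h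
  · -- main case : i ≤ m
    have hi : i ≤ m := by omega
    have n1 : (m+1).choose (i+1) * (m+2) = (m+2).choose (i+1) * (m+2-(i+1)) :=
      Nat.choose_mul_succ_eq (m+1) (i+1)
    have n2 : (m+i+2).choose (i+1) * (m+i+3) = (m+i+3).choose (i+1) * (m+i+3-(i+1)) :=
      Nat.choose_mul_succ_eq (m+i+2) (i+1)
    have n3 : m.choose (i+1) * (m+1) = (m+1).choose (i+1) * (m+1-(i+1)) :=
      Nat.choose_mul_succ_eq m (i+1)
    have n4 : (m+i+1).choose (i+1) * (m+i+2) = (m+i+2).choose (i+1) * (m+i+2-(i+1)) :=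
      Nat.choose_mul_succ_eq (m+i+1) (i+1)
    have n5 : (m+1).choose (i+1) * (i+1) = (m+1).choose i * (m+1-i) :=
      Nat.choose_succ_right_eq (m+1) i
    have n6a : (m+i+1).choose i * (m+i+2) = (m+i+2).choose i * (m+i+2-i) :=
      Nat.choose_mul_succ_eq (m+i+1) i
    have n6b : (m+i+2).choose (i+1) * (i+1) = (m+i+2).choose i * (m+i+2-i) :=
      Nat.choose_succ_right_eq (m+i+2) i
    zify [show i+1 ≤ m+2 by omega] at n1
    zify [show i+1 ≤ m+i+3 by omega] at n2
    zify [show i+1 ≤ m+1 by omega] at n3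
    zify [show i+1 ≤ m+i+2 by omega] at n4
    zify [show i ≤ m+1 by omega] at n5
    zify [show i ≤ m+i+2 by omega] at n6a
    zify [show i ≤ m+i+2 by omega] at n6b
    have z6 : ((m+i+1).choose i : ℤ) * ((m:ℤ)+i+2) = ((m+i+2).choose (i+1) : ℤ) * ((i:ℤ)+1) := by
      linear_combination n6a - n6b
    -- squared versions
    have zE : ((m+2).choose (i+1) : ℤ)^2 * ((m:ℤ)+1-i)^2
        = ((m+1).choose (i+1) : ℤ)^2 * ((m:ℤ)+2)^2 := by
      linear_combination (-(((m+1).choose (i+1) : ℤ) * ((m:ℤ)+2)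
        + ((m+2).choose (i+1) : ℤ) * ((m:ℤ)+1-i))) * n1
    have zG : (m.choose (i+1) : ℤ)^2 * ((m:ℤ)+1)^2
        = ((m+1).choose (i+1) : ℤ)^2 * ((m:ℤ)-i)^2 := by
      linear_combination ((m.choose (i+1) : ℤ) * ((m:ℤ)+1)
        + ((m+1).choose (i+1) : ℤ) * ((m:ℤ)-i)) * n3
    have zU : ((m+1).choose i : ℤ)^2 * ((m:ℤ)+1-i)^2
        = ((m+1).choose (i+1) : ℤ)^2 * ((i:ℤ)+1)^2 := by
      linear_combination (-(((m+1).choose i : ℤ) * ((m:ℤ)+1-i)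
        + ((m+1).choose (i+1) : ℤ) * ((i:ℤ)+1))) * n5
    simp only [apGG, apBB]
    rw [show m+2+(i+1) = m+i+3 by omega, show m+1+(i+1) = m+i+2 by omega,
      show m+(i+1) = m+i+1 by omega, show m+1+i = m+i+1 by omega]
    have hiZ : (i:ℤ) ≤ (m:ℤ) := by exact_mod_cast hi
    have hMne : (((m:ℤ)+1-i)^2 * ((m:ℤ)+2) * ((m:ℤ)+1)^2 * ((m:ℤ)+i+2)) ≠ 0 := by
      have h1 : (0:ℤ) < (m:ℤ)+1-i := by linarith
      have h2 : (0:ℤ) ≤ (m:ℤ) := by positivity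
      have h3 : (0:ℤ) ≤ (i:ℤ) := by positivity
      positivity
    refine mul_right_cancel₀ hMne ?_
    push_cast
    linear_combination
        ((((m:ℤ)+1)+1)^2*((m:ℤ)+1)^2*(((m:ℤ)+1)+((i:ℤ)+1))*(((m+i+3).choose (i+1) : ℤ)*(((m:ℤ)+1)+1))) * zE
      - ((((m:ℤ)+1)+1)^2*((m:ℤ)+1)^2*(((m:ℤ)+1)+((i:ℤ)+1))*(((m+1).choose (i+1) : ℤ))^2*(((m:ℤ)+1)+1)^2) * n2
      - (((m:ℤ)+1)^2*((m:ℤ)+1-i)^2*(((m:ℤ)+1)+1)*(((m+i+1).choose (i+1) : ℤ)*(((m:ℤ)+1)+((i:ℤ)+1)))) * zG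
      - (((m:ℤ)+1)^2*((m:ℤ)+1-i)^2*(((m:ℤ)+1)+1)*(((m+1).choose (i+1) : ℤ))^2*((m:ℤ)-i)^2) * n4
      + ((((i:ℤ)+1)^2+6*((m:ℤ)+1)*((i:ℤ)+1)+((i:ℤ)+1)-11*((m:ℤ)+1)^2-15*((m:ℤ)+1)-4)
          *(((m:ℤ)+1)+1)*((m:ℤ)+1)^2*(((m+i+1).choose i : ℤ)*(((m:ℤ)+1)+((i:ℤ)+1)))) * zU
      + ((((i:ℤ)+1)^2+6*((m:ℤ)+1)*((i:ℤ)+1)+((i:ℤ)+1)-11*((m:ℤ)+1)^2-15*((m:ℤ)+1)-4)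
          *(((m:ℤ)+1)+1)*((m:ℤ)+1)^2*(((m+1).choose (i+1) : ℤ))^2*((i:ℤ)+1)^2) * z6
  · -- boundary case i = m+1
    subst h
    have hc := Nat.succ_mul_centralBinom_succ (m+1)
    simp only [Nat.centralBinom] at hc
    rw [show 2*(m+1+1) = (m+2)+(m+2) by omega, show 2*(m+1) = (m+1)+(m+1) by omega,
      show m+1+1 = m+2 by omega] at hc
    simp only [apGG, apBB]
    rw [show m+1+(m+1+1) = m+(m+1)+2 by omega, show m+1+(m+1) = (m+1)+(m+1) by omega]
    have z1 : (m+1).choose (m+1+1) = 0 := Nat.choose_eq_zero_of_lt (by omega)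
    have z2 : m.choose (m+1+1) = 0 := Nat.choose_eq_zero_of_lt (by omega)
    have z3 : (m+2).choose (m+1+1) = 1 := by
      rw [show m+1+1 = m+2 by omega]; exact Nat.choose_self (m+2)
    have z4 : (m+1).choose (m+1) = 1 := Nat.choose_self (m+1)
    rw [z1, z2, z3, z4]
    rw [show m+2+(m+1+1) = (m+2)+(m+2) by omega]
    zify at hc
    push_cast at hc ⊢
    linear_combination ((m:ℤ)+2) * hc
  · -- vanishing case i ≥ m+2
    have z1 : (m+2).choose (i+1) = 0 := Nat.choose_eq_zero_of_lt (by omega)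
    have z2 : (m+1).choose (i+1) = 0 := Nat.choose_eq_zero_of_lt (by omega)
    have z3 : m.choose (i+1) = 0 := Nat.choose_eq_zero_of_lt (by omega)
    have z4 : (m+1).choose i = 0 := Nat.choose_eq_zero_of_lt (by omega)
    simp [apGG, apBB, z1, z2, z3, z4]

lemma apTele (m : ℕ) : ∀ N, ∑ j ∈ Finset.range (N+1),
    (((m:ℤ)+2)^2 * apBB (m+2) j
      - (11*((m:ℤ)+1)^2 + 11*((m:ℤ)+1) + 3) * apBB (m+1) j
      - ((m:ℤ)+1)^2 * apBB m j) = apGG (m+1) N := by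
  intro N
  induction N with
  | zero =>
    simp [apGG, apBB]
    ring
  | succ n ih =>
    rw [Finset.sum_range_succ, ih, apPoint m n]
    ring

lemma apRecur (m : ℕ) :
    ((m:ℤ)+2)^2 * (apheryBeta (m+2) : ℤ)
      = (11*((m:ℤ)+1)^2 + 11*((m:ℤ)+1) + 3) * (apheryBeta (m+1) : ℤ)
        + ((m:ℤ)+1)^2 * (apheryBeta m : ℤ) := by
  have ht := apTele m (m+2)
  have hB : ∀ k : ℕ, (apheryBeta k : ℤ) = ∑ j ∈ Finset.range (k+1), apBB k j := by
    intro k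
    simp only [apheryBeta, apBB]
    push_cast
    rfl
  have hgg : apGG (m+1) (m+2) = 0 := by
    simp [apGG, apBB, Nat.choose_eq_zero_of_lt (show m+1 < m+2 by omega)]
  rw [Finset.sum_sub_distrib, Finset.sum_sub_distrib, ← Finset.mul_sum, ← Finset.mul_sum,
    ← Finset.mul_sum, hgg] at ht
  have e1 : ∑ j ∈ Finset.range (m+2+1), apBB (m+2) j = (apheryBeta (m+2) : ℤ) := (hB (m+2)).symm
  have e2 : ∑ j ∈ Finset.range (m+2+1), apBB (m+1) j = (apheryBeta (m+1) : ℤ) := by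
    rw [Finset.sum_range_succ, hB (m+1)]
    simp [apBB, Nat.choose_eq_zero_of_lt (show m+1 < m+2 by omega)]
  have e3 : ∑ j ∈ Finset.range (m+2+1), apBB m j = (apheryBeta m : ℤ) := by
    rw [Finset.sum_range_succ, Finset.sum_range_succ, hB m]
    simp [apBB, Nat.choose_eq_zero_of_lt (show m < m+1 by omega),
      Nat.choose_eq_zero_of_lt (show m < m+2 by omega)]
  rw [e1, e2, e3] at ht
  linarith

lemma apFormula (n : ℕ) :
    ∑ k ∈ Finset.range (n+1), (11 * (k : ℤ) ^ 3 + 7 * (k:ℤ) ^ 2 - 1) * (-1) ^ k * (apheryBeta k : ℤ)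
      = (-1)^n * ((n:ℤ)+1)^2 * ((n:ℤ) * (apheryBeta (n+1) : ℤ) - ((n:ℤ)+1) * (apheryBeta n : ℤ)) := by
  induction n with
  | zero =>
    simp [apheryBeta]
  | succ n ih =>
    rw [Finset.sum_range_succ, ih]
    have hr := apRecur n
    rw [show n+1+1 = n+2 by omega]
    push_cast
    linear_combination ((-1:ℤ)^n * ((n:ℤ)+1)) * hr

theorem stmt2 (n : ℕ) (hn : 0 < n) :
    ((n : ℤ) ^ 2) ∣
      ∑ k ∈ Finset.range n,
        (11 * (k : ℤ) ^ 3 + 7 * k ^ 2 - 1) * (-1) ^ k * (apheryBeta k : ℤ) := by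
  obtain ⟨m, rfl⟩ : ∃ m, n = m+1 := ⟨n-1, by omega⟩
  rw [apFormula m]
  exact ⟨(-1)^m * ((m:ℤ) * (apheryBeta (m+1) : ℤ) - ((m:ℤ)+1) * (apheryBeta m : ℤ)), by push_cast; ring⟩
end

section
/- For every positive integer n, Σ_{k=1}^{n} C(n,k)·(-1)^{k-1}·H_{k,2} = H_n/n, where H_{k,2} = Σ_{j=1}^{k} 1/j^2 and H_n = Σ_{j=1}^{n} 1/j (an identity of rational numbers). -/
def harmonic1 (n : ℕ) : ℚ := ∑ j ∈ Finset.Icc 1 n, (1 : ℚ) / j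

def harmonic2 (n : ℕ) : ℚ := ∑ j ∈ Finset.Icc 1 n, (1 : ℚ) / (j : ℚ) ^ 2

lemma h1_succ (n : ℕ) : harmonic1 (n + 1) = harmonic1 n + 1 / (n + 1 : ℚ) := by
  unfold harmonic1
  rw [Finset.sum_Icc_succ_top (by omega)]
  push_cast; ring

lemma h2_succ (n : ℕ) : harmonic2 (n + 1) = harmonic2 n + 1 / ((n + 1 : ℚ)) ^ 2 := by
  unfold harmonic2
  rw [Finset.sum_Icc_succ_top (by omega)]
  push_cast; ring

lemma h1_zero : harmonic1 0 = 0 := rfl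
lemma h2_zero : harmonic2 0 = 0 := rfl

lemma alt_sum (n : ℕ) :
    ∑ i ∈ Finset.range (n + 1), (-1 : ℚ) ^ i * (n.choose i : ℚ) =
      if n = 0 then 1 else 0 := by
  have h := @Int.alternating_sum_range_choose n
  have := congrArg (fun z : ℤ => (z : ℚ)) h
  push_cast at this
  simpa using this

-- in rationals: C(n,k)/(k+1) = C(n+1,k+1)/(n+1)
lemma choose_div (n k : ℕ) :
    (n.choose k : ℚ) / (k + 1) = ((n + 1).choose (k + 1) : ℚ) / (n + 1) := by
  have h := Nat.add_one_mul_choose_eq n k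
  have h' : ((n + 1 : ℕ) : ℚ) * (n.choose k : ℚ)
      = ((n + 1).choose (k + 1) : ℚ) * ((k + 1 : ℕ) : ℚ) := by
    exact_mod_cast congrArg (fun z : ℕ => (z : ℚ)) h
  push_cast at h'
  have hk : (k + 1 : ℚ) ≠ 0 := by positivity
  have hn : (n + 1 : ℚ) ≠ 0 := by positivity
  field_simp
  linarith [h']

lemma lemA (m : ℕ) :
    ∑ j ∈ Finset.range m, (-1 : ℚ) ^ j * (m.choose (j + 1) : ℚ) / (j + 1) =
      harmonic1 m := by
  induction m with
  | zero => simp [h1_zero]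
  | succ m ih =>
    have pascal : ∀ j : ℕ, ((m + 1).choose (j + 1) : ℚ) =
        (m.choose (j + 1) : ℚ) + (m.choose j : ℚ) := by
      intro j
      have := Nat.choose_succ_succ m j
      push_cast [this]; ring
    have split : ∑ j ∈ Finset.range (m + 1),
        (-1 : ℚ) ^ j * ((m + 1).choose (j + 1) : ℚ) / (j + 1)
        = (∑ j ∈ Finset.range (m + 1), (-1 : ℚ) ^ j * (m.choose (j + 1) : ℚ) / (j + 1))
          + ∑ j ∈ Finset.range (m + 1), (-1 : ℚ) ^ j * (m.choose j : ℚ) / (j + 1) := by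
      rw [← Finset.sum_add_distrib]
      apply Finset.sum_congr rfl
      intro j _
      rw [pascal j]; ring
    have first : ∑ j ∈ Finset.range (m + 1), (-1 : ℚ) ^ j * (m.choose (j + 1) : ℚ) / (j + 1)
        = harmonic1 m := by
      rw [Finset.sum_range_succ, Nat.choose_succ_self]
      simpa using ih
    have second : ∑ j ∈ Finset.range (m + 1), (-1 : ℚ) ^ j * (m.choose j : ℚ) / (j + 1)
        = 1 / (m + 1 : ℚ) := by
      have step : ∀ j : ℕ, (-1 : ℚ) ^ j * (m.choose j : ℚ) / (j + 1)
          = (-1 : ℚ) ^ j * ((m + 1).choose (j + 1) : ℚ) / (m + 1) := by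
        intro j
        have := choose_div m j
        rw [mul_div_assoc, mul_div_assoc, this]
      rw [Finset.sum_congr rfl (fun j _ => step j)]
      have key : ∑ j ∈ Finset.range (m + 1), (-1 : ℚ) ^ j * ((m + 1).choose (j + 1) : ℚ)
          = 1 := by
        have h := alt_sum (m + 1)
        rw [if_neg (Nat.succ_ne_zero m)] at h
        rw [Finset.sum_range_succ'] at h
        simp only [Nat.choose_zero_right, pow_zero] at h
        have : ∑ j ∈ Finset.range (m + 1), (-1 : ℚ) ^ (j + 1) * ((m + 1).choose (j + 1) : ℚ)
            = -∑ j ∈ Finset.range (m + 1), (-1 : ℚ) ^ j * ((m + 1).choose (j + 1) : ℚ) := by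
          rw [← Finset.sum_neg_distrib]
          apply Finset.sum_congr rfl
          intro j _; ring
        rw [this] at h
        push_cast at h
        linarith [h]
      rw [← Finset.sum_div, key]
    rw [split, first, second, h1_succ]

lemma lemB (n : ℕ) :
    ∑ k ∈ Finset.range (n + 1), (-1 : ℚ) ^ k * (n.choose k : ℚ) / ((k : ℚ) + 1) ^ 2 =
      harmonic1 (n + 1) / (n + 1) := by
  have step : ∀ k : ℕ, (-1 : ℚ) ^ k * (n.choose k : ℚ) / ((k : ℚ) + 1) ^ 2
      = ((-1 : ℚ) ^ k * ((n + 1).choose (k + 1) : ℚ) / (k + 1)) / (n + 1) := by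
    intro k
    have h := choose_div n k
    calc (-1 : ℚ) ^ k * (n.choose k : ℚ) / ((k : ℚ) + 1) ^ 2
        = (-1 : ℚ) ^ k * (((n.choose k : ℚ) / ((k : ℚ) + 1)) / ((k : ℚ) + 1)) := by
          rw [sq, ← div_div]; ring
      _ = (-1 : ℚ) ^ k * ((((n + 1).choose (k + 1) : ℚ) / ((n : ℚ) + 1)) / ((k : ℚ) + 1)) := by
          rw [h]
      _ = ((-1 : ℚ) ^ k * (((n + 1)).choose (k + 1) : ℚ) / ((k : ℚ) + 1)) / ((n : ℚ) + 1) := by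
          ring
  rw [Finset.sum_congr rfl (fun k _ => step k), ← Finset.sum_div, lemA (n + 1)]

theorem stmt9 (n : ℕ) (hn : 0 < n) :
    ∑ k ∈ Finset.Icc 1 n, (n.choose k : ℚ) * (-1) ^ (k - 1) * harmonic2 k =
      harmonic1 n / n := by
  obtain ⟨m, rfl⟩ : ∃ m, n = m + 1 := ⟨n - 1, by omega⟩
  have hIcc : Finset.Icc 1 (m + 1) = Finset.Ico 1 (m + 2) := by
    exact (Finset.Ico_add_one_right_eq_Icc (a := 1) (b := m + 1)).symm
  rw [hIcc, Finset.sum_Ico_eq_sum_range]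
  have hrange : m + 2 - 1 = m + 1 := by omega
  rw [hrange]
  have hterm : ∀ i : ℕ, ((m + 1).choose (1 + i) : ℚ) * (-1) ^ (1 + i - 1) *
      harmonic2 (1 + i)
      = (-1 : ℚ) ^ i * (m.choose (i + 1) : ℚ) * harmonic2 (i + 1)
        + (-1 : ℚ) ^ i * (m.choose i : ℚ) * harmonic2 i
        + (-1 : ℚ) ^ i * (m.choose i : ℚ) / ((i : ℚ) + 1) ^ 2 := by
    intro i
    have h1 : 1 + i - 1 = i := by omega
    have h2 : 1 + i = i + 1 := by omega
    rw [h1, h2]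
    have pascal : ((m + 1).choose (i + 1) : ℚ) =
        (m.choose (i + 1) : ℚ) + (m.choose i : ℚ) := by
      push_cast [Nat.choose_succ_succ m i]; ring
    rw [pascal, h2_succ]
    ring
  rw [Finset.sum_congr rfl (fun i _ => hterm i)]
  rw [Finset.sum_add_distrib, Finset.sum_add_distrib]
  have S1 : ∑ i ∈ Finset.range (m + 1),
      (-1 : ℚ) ^ i * (m.choose (i + 1) : ℚ) * harmonic2 (i + 1)
      = ∑ i ∈ Finset.range m, (-1 : ℚ) ^ i * (m.choose (i + 1) : ℚ) * harmonic2 (i + 1) := by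
    rw [Finset.sum_range_succ, Nat.choose_succ_self]
    simp
  have S2 : ∑ i ∈ Finset.range (m + 1),
      (-1 : ℚ) ^ i * (m.choose i : ℚ) * harmonic2 i
      = -∑ i ∈ Finset.range m, (-1 : ℚ) ^ i * (m.choose (i + 1) : ℚ) * harmonic2 (i + 1) := by
    rw [Finset.sum_range_succ', h2_zero]
    rw [← Finset.sum_neg_distrib]
    simp only [mul_zero, add_zero]
    apply Finset.sum_congr rfl
    intro i _
    ring
  have T : ∑ i ∈ Finset.range (m + 1),
      (-1 : ℚ) ^ i * (m.choose i : ℚ) / ((i : ℚ) + 1) ^ 2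
      = harmonic1 (m + 1) / (m + 1) := lemB m
  rw [S1, S2, T]
  push_cast
  ring
end
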